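/- Let A be a positive semidefinite operator, S a subspace on which A is positive definite, ψ a unit vector in S with Aψ ≠ 0, and φ = Aψ / ‖Aψ‖. Then |⟨ψ|φ⟩|² ≥ κ(A|_S)^{−2}, where κ(A|_S) is the ratio of the largest to the smallest eigenvalue of the compression of A to S. -/

import Mathlib

open scoped InnerProductSpace

/-- Let `A` be positive semidefinite, `S` an `A`-invariant
subspace on which `A` is positive definite with eigenvalues of the restriction
between `λmin > 0` and `λmax`, `ψ ∈ S` a unit vector with `Aψ ≠ 0`, and
`φ = Aψ/‖Aψ‖`. Then `|⟨ψ|φ⟩|² ≥ κ(A|_S)⁻² = λmin²/λmax²`. -/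
theorem stmt8 {H : Type*} [NormedAddCommGroup H] [InnerProductSpace ℂ H]
    [FiniteDimensional ℂ H] (A : H →ₗ[ℂ] H)
    (hAa : LinearMap.adjoint A = A) (hApsd : ∀ x : H, 0 ≤ (⟪x, A x⟫_ℂ).re)
    (S : Submodule ℂ H) (hSinv : ∀ x ∈ S, A x ∈ S)
    (lmin lmax : ℝ) (hlmin : 0 < lmin)
    (hlow : ∀ x ∈ S, lmin * ‖x‖ ^ 2 ≤ (⟪x, A x⟫_ℂ).re)
    (hhigh : ∀ x ∈ S, (⟪x, A x⟫_ℂ).re ≤ lmax * ‖x‖ ^ 2)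
    (ψ : H) (hψS : ψ ∈ S) (hψ : ‖ψ‖ = 1) (hAψ : A ψ ≠ 0)
    (φ : H) (hφ : φ = (‖A ψ‖⁻¹ : ℂ) • A ψ) :
    ‖⟪ψ, φ⟫_ℂ‖ ^ 2 ≥ (lmax / lmin) ^ (-2 : ℤ) := by
  set a : ℝ := (⟪ψ, A ψ⟫_ℂ).re with ha
  set b : ℝ := ‖A ψ‖ ^ 2 with hbdef
  set c : ℝ := (⟪A ψ, A (A ψ)⟫_ℂ).re with hc
  have hAψS : A ψ ∈ S := hSinv ψ hψS
  have hbpos : 0 < b := pow_pos (norm_pos_iff.mpr hAψ) 2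
  have ha_lb : lmin ≤ a := by have := hlow ψ hψS; simpa [hψ] using this
  have ha_ub : a ≤ lmax := by have := hhigh ψ hψS; simpa [hψ] using this
  have hc_ub : c ≤ lmax * b := hhigh (A ψ) hAψS
  have hc_lb : lmin * b ≤ c := hlow (A ψ) hAψS
  have hcpos : 0 < c := lt_of_lt_of_le (by positivity) hc_lb
  have hapos : 0 < a := lt_of_lt_of_le hlmin ha_lb
  have hlmax : (0:ℝ) < lmax := lt_of_lt_of_le hapos ha_ub
  have had : ⟪ψ, A (A ψ)⟫_ℂ = ⟪A ψ, A ψ⟫_ℂ := by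
    nth_rewrite 1 [← hAa]
    exact LinearMap.adjoint_inner_right A ψ (A ψ)
  have hb' : (⟪A ψ, A ψ⟫_ℂ).re = b := by
    exact_mod_cast congrArg Complex.re (inner_self_eq_norm_sq_to_K (𝕜 := ℂ) (A ψ))
  -- Cauchy–Schwarz for the positive semidefinite form ⟪·, A ·⟫
  have hquad : ∀ t : ℝ, 0 ≤ a + 2 * t * b + t ^ 2 * c := by
    intro t
    have h := hApsd (ψ + (t : ℂ) • A ψ)
    simp only [map_add, map_smul, inner_add_left, inner_add_right, inner_smul_left,
      inner_smul_right, had] at h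
    simp only [Complex.add_re, Complex.mul_re, Complex.conj_re, Complex.conj_im,
      Complex.ofReal_re, Complex.ofReal_im, neg_zero, zero_mul, mul_zero, sub_zero,
      hb', ← ha, ← hc] at h
    nlinarith [h]
  have hkey : b ≤ lmax * a := by
    have h := hquad (-(b / c))
    have hb2 : b ^ 2 ≤ a * c := by
      have hc0 : c ≠ 0 := ne_of_gt hcpos
      have e : a + 2 * (-(b / c)) * b + (-(b / c)) ^ 2 * c = a - b ^ 2 / c := by
        field_simp; ring
      rw [e, sub_nonneg, div_le_iff₀ hcpos] at h
      linarith [h]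
    nlinarith [hb2, hc_ub, hbpos, hapos]
  -- compute the inner product with φ
  have hnAψ : (0:ℝ) < ‖A ψ‖ := norm_pos_iff.mpr hAψ
  have hip : ‖⟪ψ, φ⟫_ℂ‖ = ‖A ψ‖⁻¹ * ‖⟪ψ, A ψ⟫_ℂ‖ := by
    rw [hφ, inner_smul_right]
    simp [norm_mul, abs_of_pos (inv_pos.mpr hnAψ)]
  have hre_le : a ≤ ‖⟪ψ, A ψ⟫_ℂ‖ := by
    calc a ≤ ‖⟪ψ, A ψ⟫_ℂ‖ := Complex.re_le_norm _
    _ = ‖⟪ψ, A ψ⟫_ℂ‖ := rfl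
  have hsq : a ^ 2 / b ≤ ‖⟪ψ, φ⟫_ℂ‖ ^ 2 := by
    rw [hip, mul_pow]
    have h1 : a ^ 2 ≤ ‖⟪ψ, A ψ⟫_ℂ‖ ^ 2 :=
      pow_le_pow_left₀ (le_of_lt hapos) hre_le 2
    have h2 : (‖A ψ‖⁻¹) ^ 2 = b⁻¹ := by
      rw [hbdef]; field_simp
    rw [h2]
    rw [div_eq_mul_inv, mul_comm]
    exact mul_le_mul_of_nonneg_left h1 (by positivity)
  have hgoal : (lmax / lmin) ^ (-2 : ℤ) = lmin ^ 2 / lmax ^ 2 := by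
    rw [zpow_neg, show ((2:ℤ)) = ((2:ℕ):ℤ) by norm_num, zpow_natCast]
    field_simp
  rw [ge_iff_le, hgoal]
  refine le_trans ?_ hsq
  rw [div_le_div_iff₀ (by positivity) hbpos]
  nlinarith [hkey, ha_lb, ha_ub, hbpos, hapos, hlmin]
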